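/- Let w_η(x) = (1/2)(x - η)·∇u_λ(x) + u_λ(x) - λ v_λ(x), where u_λ solves -Δu = λu + |u|u in Ω ⊂ ℝ^6 and v_λ solves -Δv = (λ + 2|u_λ|)v + u_λ in Ω. Then w_η satisfies -Δ w_η = (λ + 2|u_λ|) w_η in Ω, for every η ∈ ℝ^6. -/

import Mathlib

open scoped BigOperators

noncomputable section

/-- standard basis vector -/
def sgl (i : Fin 6) : EuclideanSpace ℝ (Fin 6) := EuclideanSpace.single i 1

/-- partial derivative in direction `i` -/
def pd (f : EuclideanSpace ℝ (Fin 6) → ℝ) (i : Fin 6) : EuclideanSpace ℝ (Fin 6) → ℝ :=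
  fun y => fderiv ℝ f y (sgl i)

lemma hasDerivAt_abs_mul (t : ℝ) : HasDerivAt (fun s : ℝ => |s| * s) (2 * |t|) t := by
  rcases lt_trichotomy t 0 with ht | rfl | ht
  · have h : HasDerivAt (fun s : ℝ => -s * s) (2 * |t|) t := by
      have := (hasDerivAt_id t).neg.mul (hasDerivAt_id t)
      refine this.congr_deriv ?_
      rw [abs_of_neg ht]; simp only [id, Pi.neg_apply]; ring
    apply h.congr_of_eventuallyEq
    filter_upwards [eventually_lt_nhds ht] with s hs
    rw [abs_of_neg hs]
  · have h : HasDerivAt (fun s : ℝ => |s| * s) 0 0 := by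
      rw [hasDerivAt_iff_tendsto_slope]
      have he : (fun s : ℝ => |s|) =ᶠ[nhdsWithin (0:ℝ) {(0:ℝ)}ᶜ] slope (fun s : ℝ => |s| * s) 0 := by
        filter_upwards [self_mem_nhdsWithin] with s hs
        have hs' : s ≠ 0 := hs
        simp only [slope_def_field]
        field_simp; simp
      have hT : Filter.Tendsto (fun s : ℝ => |s|) (nhdsWithin (0:ℝ) {(0:ℝ)}ᶜ) (nhds 0) := by
        have := continuous_abs.tendsto (0:ℝ)
        simpa using this.mono_left nhdsWithin_le_nhds
      exact hT.congr' he
    simpa using h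
  · have h : HasDerivAt (fun s : ℝ => s * s) (2 * |t|) t := by
      have := (hasDerivAt_id t).mul (hasDerivAt_id t)
      refine this.congr_deriv ?_
      rw [abs_of_pos ht]; simp only [id]; ring
    apply h.congr_of_eventuallyEq
    filter_upwards [eventually_gt_nhds ht] with s hs
    rw [abs_of_pos hs]

lemma clm_decomp (L : EuclideanSpace ℝ (Fin 6) →L[ℝ] ℝ) (y : EuclideanSpace ℝ (Fin 6)) :
    L y = ∑ i, y i * L (sgl i) := by
  have hap : ∀ (s : Finset (Fin 6)) (f : Fin 6 → EuclideanSpace ℝ (Fin 6)) (j : Fin 6),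
      (∑ x ∈ s, f x) j = ∑ x ∈ s, f x j := by
    intro s f j
    induction s using Finset.induction with
    | empty => simp
    | insert a s h ih => rw [Finset.sum_insert h, Finset.sum_insert h, ← ih]; rfl
  have hy : y = ∑ i, y i • sgl i := by
    ext j
    rw [hap]
    simp [sgl, EuclideanSpace.single_apply]
  conv_lhs => rw [hy]
  simp [map_sum]

lemma pd_contDiffOn {n m : WithTop ℕ∞} {f : EuclideanSpace ℝ (Fin 6) → ℝ}
    {Ω : Set (EuclideanSpace ℝ (Fin 6))} (hΩ : IsOpen Ω)
    (hf : ContDiffOn ℝ m f Ω) (h : n + 1 ≤ m) (i : Fin 6) :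
    ContDiffOn ℝ n (pd f i) Ω :=
  ((hf.of_le h).fderiv_of_isOpen hΩ le_rfl).clm_apply contDiffOn_const

lemma fderiv_clm_apply_const {c : EuclideanSpace ℝ (Fin 6) → (EuclideanSpace ℝ (Fin 6) →L[ℝ] ℝ)}
    {x : EuclideanSpace ℝ (Fin 6)} (hc : DifferentiableAt ℝ c x) (a b : EuclideanSpace ℝ (Fin 6)) :
    fderiv ℝ (fun y => c y a) x b = fderiv ℝ c x b a := by
  have h := fderiv_clm_apply hc (differentiableAt_const a)
  rw [show (fun y => c y a) = fun y => (c y) ((fun _ => a) y) from rfl, h]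
  simp

lemma schwarz_pd {f : EuclideanSpace ℝ (Fin 6) → ℝ} {Ω : Set (EuclideanSpace ℝ (Fin 6))}
    (hΩ : IsOpen Ω) (hf : ContDiffOn ℝ 2 f Ω) {x : EuclideanSpace ℝ (Fin 6)} (hx : x ∈ Ω)
    (i j : Fin 6) : pd (pd f i) j x = pd (pd f j) i x := by
  have hDf : DifferentiableAt ℝ (fderiv ℝ f) x :=
    ((hf.fderiv_of_isOpen hΩ (show (1:WithTop ℕ∞) + 1 ≤ 2 by norm_num)).contDiffAt (hΩ.mem_nhds hx)).differentiableAt one_ne_zero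
  have hsymm := (hf.contDiffAt (hΩ.mem_nhds hx)).isSymmSndFDerivAt (by simp [minSmoothness_of_isRCLikeNormedField])
  show fderiv ℝ (fun y => fderiv ℝ f y (sgl i)) x (sgl j)
      = fderiv ℝ (fun y => fderiv ℝ f y (sgl j)) x (sgl i)
  rw [fderiv_clm_apply_const hDf, fderiv_clm_apply_const hDf, hsymm (sgl j) (sgl i)]

end

/-- The Laplacian on `ℝ^6` as the sum of second partial derivatives. -/
noncomputable def lap (f : EuclideanSpace ℝ (Fin 6) → ℝ)
    (x : EuclideanSpace ℝ (Fin 6)) : ℝ :=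
  ∑ i : Fin 6, fderiv ℝ (fun y => fderiv ℝ f y (EuclideanSpace.single i 1)) x
    (EuclideanSpace.single i 1)

/-- If `u_λ` solves `-Δu = λu + |u|u` and `v_λ` solves `-Δv = (λ + 2|u_λ|)v + u_λ`
in `Ω ⊂ ℝ^6`, then for every `η ∈ ℝ^6` the function
`w_η(x) = (1/2)(x-η)·∇u_λ(x) + u_λ(x) - λ v_λ(x)` satisfies
`-Δw_η = (λ + 2|u_λ|) w_η` in `Ω`. -/
theorem w_eta_equation
    (Ω : Set (EuclideanSpace ℝ (Fin 6))) (hΩo : IsOpen Ω)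
    (lam : ℝ) (hlam : 0 < lam)
    (u v : EuclideanSpace ℝ (Fin 6) → ℝ)
    (hureg : ContDiffOn ℝ 3 u Ω) (hvreg : ContDiffOn ℝ 2 v Ω)
    (hueq : ∀ x ∈ Ω, -lap u x = lam * u x + |u x| * u x)
    (hveq : ∀ x ∈ Ω, -lap v x = (lam + 2 * |u x|) * v x + u x)
    (η : EuclideanSpace ℝ (Fin 6))
    (w : EuclideanSpace ℝ (Fin 6) → ℝ)
    (hw : ∀ x, w x = (1 / 2 : ℝ) * fderiv ℝ u x (x - η) + u x - lam * v x) :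
    ∀ x ∈ Ω, -lap w x = (lam + 2 * |u x|) * w x := by
  have hu2 : ContDiffOn ℝ 2 u Ω := hureg.of_le (by norm_num)
  have hgu : ∀ i, ContDiffOn ℝ 2 (pd u i) Ω := fun i =>
    pd_contDiffOn hΩo hureg (by norm_num) i
  have hhu : ∀ i j, ContDiffOn ℝ 1 (pd (pd u i) j) Ω := fun i j =>
    pd_contDiffOn hΩo (hgu i) (by norm_num) j
  have hgv : ∀ i, ContDiffOn ℝ 1 (pd v i) Ω := fun i =>
    pd_contDiffOn hΩo hvreg (by norm_num) i
  have dAt : ∀ {f : EuclideanSpace ℝ (Fin 6) → ℝ} {n : WithTop ℕ∞},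
      ContDiffOn ℝ n f Ω → 1 ≤ n → ∀ y ∈ Ω, DifferentiableAt ℝ f y := by
    intro f n hf hn y hy
    exact (hf.contDiffAt (hΩo.mem_nhds hy)).differentiableAt (zero_lt_one.trans_le hn).ne'
  have hDu : ∀ y ∈ Ω, DifferentiableAt ℝ (fderiv ℝ u) y := by
    intro y hy
    have hC : ContDiffOn ℝ 2 (fderiv ℝ u) Ω :=
      hureg.fderiv_of_isOpen hΩo (show (2:WithTop ℕ∞) + 1 ≤ 3 by norm_num)
    exact (hC.contDiffAt (hΩo.mem_nhds hy)).differentiableAt (by norm_num)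
  -- first derivative of w
  have hw1 : ∀ y ∈ Ω, ∀ j, pd w j y =
      (3/2) * pd u j y + (1/2) * ∑ i, (y i - η i) * pd (pd u i) j y - lam * pd v j y := by
    intro y hy j
    have hDuy := hDu y hy
    have H1 : HasFDerivAt (fun z : EuclideanSpace ℝ (Fin 6) => fderiv ℝ u z (z - η))
        ((fderiv ℝ u y).comp (ContinuousLinearMap.id ℝ _)
          + (fderiv ℝ (fderiv ℝ u) y).flip (y - η)) y :=
      hDuy.hasFDerivAt.clm_apply ((hasFDerivAt_id y).sub_const η)
    have Hu := (dAt hu2 one_le_two y hy).hasFDerivAt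
    have Hv := (dAt hvreg one_le_two y hy).hasFDerivAt
    have Hw : HasFDerivAt w ((1/2 : ℝ) • ((fderiv ℝ u y).comp (ContinuousLinearMap.id ℝ _)
        + (fderiv ℝ (fderiv ℝ u) y).flip (y - η)) + fderiv ℝ u y - lam • fderiv ℝ v y) y := by
      have h := ((H1.const_mul (1/2 : ℝ)).add Hu).sub (Hv.const_mul lam)
      exact h.congr_of_eventuallyEq (Filter.Eventually.of_forall fun z => hw z)
    have e2 : fderiv ℝ (fderiv ℝ u) y (sgl j) (y - η)
        = ∑ i, (y i - η i) * pd (pd u i) j y := by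
      rw [clm_decomp]
      refine Finset.sum_congr rfl fun i _ => ?_
      have h1 : (y - η) i = y i - η i := rfl
      have h2 : pd (pd u i) j y = fderiv ℝ (fderiv ℝ u) y (sgl j) (sgl i) :=
        fderiv_clm_apply_const hDuy (sgl i) (sgl j)
      rw [h1, h2]
    have e1 : pd w j y = (1/2) * (fderiv ℝ u y (sgl j)
        + fderiv ℝ (fderiv ℝ u) y (sgl j) (y - η)) + fderiv ℝ u y (sgl j)
        - lam * fderiv ℝ v y (sgl j) := by
      show fderiv ℝ w y (sgl j) = _
      rw [Hw.fderiv]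
      simp [ContinuousLinearMap.add_apply, ContinuousLinearMap.smul_apply,
        ContinuousLinearMap.sub_apply, ContinuousLinearMap.comp_apply,
        ContinuousLinearMap.flip_apply, ContinuousLinearMap.coe_id', smul_eq_mul]
      ring
    rw [e1, e2]
    show (1/2) * (pd u j y + ∑ i, (y i - η i) * pd (pd u i) j y) + pd u j y - lam * pd v j y = _
    ring
  intro x hx
  have hmem := hΩo.mem_nhds hx
  -- second derivative of w
  have hw2 : ∀ j, pd (pd w j) j x =
      2 * pd (pd u j) j x + (1/2) * ∑ i, (x i - η i) * pd (pd (pd u i) j) j x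
        - lam * pd (pd v j) j x := by
    intro j
    have heq : pd w j =ᶠ[nhds x] fun y => (3/2) * pd u j y
        + (1/2) * ∑ i, (y i - η i) * pd (pd u i) j y - lam * pd v j y :=
      Filter.eventuallyEq_of_mem hmem fun y hy => hw1 y hy j
    have Hgu := (dAt (hgu j) one_le_two x hx).hasFDerivAt
    have Hgv := (dAt (hgv j) le_rfl x hx).hasFDerivAt
    have Hsum : HasFDerivAt (fun y => ∑ i, (y i - η i) * pd (pd u i) j y)
        (∑ i, ((x i - η i) • fderiv ℝ (pd (pd u i) j) x
          + pd (pd u i) j x • (EuclideanSpace.proj i : EuclideanSpace ℝ (Fin 6) →L[ℝ] ℝ))) x := by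
      apply HasFDerivAt.fun_sum
      intro i _
      have Hproj : HasFDerivAt (fun y : EuclideanSpace ℝ (Fin 6) => y i - η i)
          (EuclideanSpace.proj i : EuclideanSpace ℝ (Fin 6) →L[ℝ] ℝ) x :=
        (EuclideanSpace.proj (𝕜 := ℝ) i).hasFDerivAt.sub_const (η i)
      exact Hproj.mul (dAt (hhu i j) le_rfl x hx).hasFDerivAt
    have hF := ((Hgu.const_mul (3/2 : ℝ)).fun_add (Hsum.const_mul (1/2 : ℝ))).fun_sub
      (Hgv.const_mul lam)
    have e0 : pd (pd w j) j x = fderiv ℝ (pd w j) x (sgl j) := rfl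
    rw [e0, heq.fderiv_eq, hF.fderiv]
    have hproj : ∀ i : Fin 6, (EuclideanSpace.proj (𝕜 := ℝ) i) (sgl j) = sgl j i :=
      fun _ => rfl
    simp only [ContinuousLinearMap.add_apply, ContinuousLinearMap.smul_apply,
      ContinuousLinearMap.sub_apply, ContinuousLinearMap.coe_sum', Finset.sum_apply,
      smul_eq_mul, hproj]
    have hdelta : ∀ i : Fin 6, (sgl j) i = if i = j then (1:ℝ) else 0 := by
      intro i; simp [sgl, EuclideanSpace.single_apply]
    have e3 : ∑ i, ((x i - η i) * fderiv ℝ (pd (pd u i) j) x (sgl j)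
        + pd (pd u i) j x * (sgl j) i)
        = (∑ i, (x i - η i) * pd (pd (pd u i) j) j x) + pd (pd u j) j x := by
      rw [Finset.sum_add_distrib]
      congr 1
      simp only [hdelta, mul_ite, mul_one, mul_zero]
      simp
    rw [e3]
    have r1 : fderiv ℝ (pd u j) x (sgl j) = pd (pd u j) j x := rfl
    have r2 : fderiv ℝ (pd v j) x (sgl j) = pd (pd v j) j x := rfl
    rw [r1, r2]
    ring
  -- third-order term
  have hthird : ∀ i, ∑ j, pd (pd (pd u i) j) j x = -((lam + 2*|u x|) * pd u i x) := by
    intro i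
    have step1 : ∀ j, pd (pd (pd u i) j) j x = pd (pd (pd u j) j) i x := by
      intro j
      have hswap : pd (pd u i) j =ᶠ[nhds x] pd (pd u j) i :=
        Filter.eventuallyEq_of_mem hmem fun y hy => schwarz_pd hΩo hu2 hy i j
      have e4 : pd (pd (pd u i) j) j x = fderiv ℝ (pd (pd u i) j) x (sgl j) := rfl
      rw [e4, hswap.fderiv_eq]
      exact schwarz_pd hΩo (hgu j) hx i j
    rw [Finset.sum_congr rfl fun j _ => step1 j]
    have hsum : ∑ j, pd (pd (pd u j) j) i x
        = fderiv ℝ (fun y => ∑ j, pd (pd u j) j y) x (sgl i) := by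
      have H : HasFDerivAt (fun y => ∑ j, pd (pd u j) j y)
          (∑ j, fderiv ℝ (pd (pd u j) j) x) x :=
        HasFDerivAt.fun_sum fun j _ => (dAt (hhu j j) le_rfl x hx).hasFDerivAt
      rw [H.fderiv]
      simp [ContinuousLinearMap.coe_sum', Finset.sum_apply]
      rfl
    rw [hsum]
    have hlapeq : (fun y => ∑ j, pd (pd u j) j y) =ᶠ[nhds x]
        fun y => -(lam * u y + |u y| * u y) := by
      apply Filter.eventuallyEq_of_mem hmem
      intro y hy
      have h5 : lap u y = ∑ j, pd (pd u j) j y := rfl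
      have h6 := hueq y hy
      show ∑ j, pd (pd u j) j y = -(lam * u y + |u y| * u y)
      rw [← h5]; linarith
    rw [hlapeq.fderiv_eq]
    have Hu := (dAt hu2 one_le_two x hx).hasFDerivAt
    have Habs : HasFDerivAt (fun y => |u y| * u y) ((2*|u x|) • fderiv ℝ u x) x :=
      (hasDerivAt_abs_mul (u x)).comp_hasFDerivAt x Hu
    have H2 : HasFDerivAt (fun y => -(lam * u y + |u y| * u y))
        (-(lam • fderiv ℝ u x + (2*|u x|) • fderiv ℝ u x)) x :=
      ((Hu.const_mul lam).add Habs).neg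
    rw [H2.fderiv]
    show -(lam • fderiv ℝ u x + (2*|u x|) • fderiv ℝ u x) (sgl i) = _
    simp only [ContinuousLinearMap.neg_apply, ContinuousLinearMap.add_apply,
      ContinuousLinearMap.smul_apply, smul_eq_mul]
    show -(lam * pd u i x + 2*|u x| * pd u i x) = _
    ring
  -- assemble
  have hdbl : ∑ j, ∑ i, (x i - η i) * pd (pd (pd u i) j) j x
      = -((lam + 2*|u x|) * ∑ i, (x i - η i) * pd u i x) := by
    rw [Finset.sum_comm]
    calc ∑ i, ∑ j, (x i - η i) * pd (pd (pd u i) j) j x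
        = ∑ i, -((lam + 2*|u x|) * ((x i - η i) * pd u i x)) := by
          refine Finset.sum_congr rfl fun i _ => ?_
          rw [← Finset.mul_sum, hthird i]; ring
      _ = -((lam + 2*|u x|) * ∑ i, (x i - η i) * pd u i x) := by
          rw [Finset.sum_neg_distrib, ← Finset.mul_sum]
  have hP : fderiv ℝ u x (x - η) = ∑ i, (x i - η i) * pd u i x := by
    rw [clm_decomp]
    rfl
  have hlapu : lap u x = ∑ j, pd (pd u j) j x := rfl
  have hlapv : lap v x = ∑ j, pd (pd v j) j x := rfl
  have hlapw : lap w x = ∑ j, pd (pd w j) j x := rfl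
  have hU := hueq x hx
  have hV := hveq x hx
  have hlapw2 : lap w x = 2 * lap u x
      + (1/2) * (-((lam + 2*|u x|) * ∑ i, (x i - η i) * pd u i x)) - lam * lap v x := by
    rw [hlapw, Finset.sum_congr rfl fun j _ => hw2 j, Finset.sum_sub_distrib,
      Finset.sum_add_distrib, ← Finset.mul_sum, ← Finset.mul_sum, ← Finset.mul_sum,
      hdbl, hlapu, hlapv]
  rw [hw x, hP, hlapw2]
  have hU' : lap u x = -(lam * u x + |u x| * u x) := by linarith
  have hV' : lap v x = -((lam + 2 * |u x|) * v x + u x) := by linarith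
  rw [hU', hV']
  ring
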